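/- Let N ≥ 1, let H_N(g) be the N×N matrix with diagonal entries v_1, ..., v_N, superdiagonal entries e^{-g}, subdiagonal entries e^{g}, corner entries (H_N)_{1,N} = e^{g} and (H_N)_{N,1} = e^{-g}, and all other entries zero. Let Φ_N(z) = T_N(z)⋯T_1(z) with T_j(z) = [[z − v_j, −1],[1, 0]]. Then z ∈ ℂ is an eigenvalue of H_N(g) if and only if e^{Ng} is an eigenvalue of Φ_N(z). -/

import Mathlib

/-! ### Auxiliary definitions and lemmas -/

section FinVal

variable {N : ℕ} [NeZero N]

lemma hnFinOneVal (hN : 2 ≤ N) : ((1 : Fin N) : ℕ) = 1 := by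
  rw [Fin.val_one']; exact Nat.mod_eq_of_lt (by omega)

lemma hnValSub' (hN : 2 ≤ N) (i : Fin N) (h : (i : ℕ) ≠ 0) :
    ((i - 1 : Fin N) : ℕ) = (i : ℕ) - 1 := by
  rw [Fin.sub_def]
  simp only [hnFinOneVal hN]
  have hi := i.isLt
  show (N - 1 + (i:ℕ)) % N = (i:ℕ) - 1
  rw [show N - 1 + (i : ℕ) = N + ((i : ℕ) - 1) by omega, Nat.add_mod_left,
    Nat.mod_eq_of_lt (by omega)]

lemma hnValSubZero (hN : 2 ≤ N) (i : Fin N) (h : (i : ℕ) = 0) :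
    ((i - 1 : Fin N) : ℕ) = N - 1 := by
  rw [Fin.sub_def]
  simp only [hnFinOneVal hN]
  show (N - 1 + (i:ℕ)) % N = N - 1
  rw [h, Nat.add_zero, Nat.mod_eq_of_lt (by omega)]

lemma hnValAdd' (i : Fin N) (h : (i : ℕ) + 1 < N) :
    ((i + 1 : Fin N) : ℕ) = (i : ℕ) + 1 := by
  rw [Fin.add_def]
  simp only [hnFinOneVal (by omega : 2 ≤ N)]
  show ((i:ℕ) + 1) % N = (i:ℕ) + 1
  rw [Nat.mod_eq_of_lt h]

lemma hnValAddLast (hN : 2 ≤ N) (i : Fin N) (h : (i : ℕ) = N - 1) :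
    ((i + 1 : Fin N) : ℕ) = 0 := by
  rw [Fin.add_def]
  simp only [hnFinOneVal hN]
  show ((i:ℕ) + 1) % N = 0
  rw [h, show N - 1 + 1 = N by omega, Nat.mod_self]

/-- Periodic extension of a vector on `Fin N` to `ℕ`. -/
noncomputable def perExt (ψ : Fin N → ℂ) (k : ℕ) : ℂ :=
  ψ ⟨k % N, Nat.mod_lt _ (Nat.pos_of_ne_zero (NeZero.ne N))⟩

lemma perExt_val (ψ : Fin N → ℂ) (i : Fin N) : perExt ψ (i : ℕ) = ψ i :=
  congrArg ψ (Fin.ext (Nat.mod_eq_of_lt i.isLt))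

lemma perExt_top (ψ : Fin N → ℂ) : perExt ψ N = perExt ψ 0 :=
  congrArg ψ (Fin.ext (by show N % N = 0 % N; rw [Nat.mod_self, Nat.zero_mod]))

lemma perExt_pred (hN : 2 ≤ N) (ψ : Fin N → ℂ) (i : Fin N) (h : (i : ℕ) ≠ 0) :
    perExt ψ ((i : ℕ) - 1) = ψ (i - 1) := by
  refine congrArg ψ (Fin.ext ?_)
  show ((i:ℕ) - 1) % N = ((i - 1 : Fin N) : ℕ)
  rw [hnValSub' hN i h, Nat.mod_eq_of_lt (by have := i.isLt; omega)]

lemma perExt_succ (hN : 2 ≤ N) (ψ : Fin N → ℂ) (i : Fin N) :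
    perExt ψ ((i : ℕ) + 1) = ψ (i + 1) := by
  refine congrArg ψ (Fin.ext ?_)
  show ((i:ℕ) + 1) % N = ((i + 1 : Fin N) : ℕ)
  rcases eq_or_ne ((i : ℕ)) (N - 1) with h | h
  · rw [hnValAddLast hN i h, h, show N - 1 + 1 = N by omega, Nat.mod_self]
  · have := i.isLt
    rw [hnValAdd' i (by omega), Nat.mod_eq_of_lt (by omega)]

end FinVal

/-! ### The Hatano–Nelson matrix -/

/-- The Hatano–Nelson (non-Hermitian Anderson) matrix `H_N(g)` on a ring:
diagonal `v`, superdiagonal `e^{-g}`, subdiagonal `e^{g}`, corner entries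
`(1,N) ↦ e^{g}` and `(N,1) ↦ e^{-g}`. -/
noncomputable def hatanoNelson (N : ℕ) (g : ℝ) (v : Fin N → ℝ) :
    Matrix (Fin N) (Fin N) ℂ :=
  Matrix.of fun i j =>
    if i = j then (v i : ℂ)
    else if (j : ℕ) = (i : ℕ) + 1 then (Real.exp (-g) : ℂ)
    else if (i : ℕ) = (j : ℕ) + 1 then (Real.exp g : ℂ)
    else if (i : ℕ) = 0 ∧ (j : ℕ) = N - 1 then (Real.exp g : ℂ)
    else if (i : ℕ) = N - 1 ∧ (j : ℕ) = 0 then (Real.exp (-g) : ℂ)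
    else 0

section Entries

variable {N : ℕ} [NeZero N] (g : ℝ) (v : Fin N → ℝ)

omit [NeZero N] in
lemma hn_diag (i : Fin N) : hatanoNelson N g v i i = (v i : ℂ) := by
  simp [hatanoNelson]

lemma hn_sub (hN : 3 ≤ N) (i : Fin N) :
    hatanoNelson N g v i (i - 1) = (Real.exp g : ℂ) := by
  have hi := i.isLt
  rcases eq_or_ne ((i : ℕ)) 0 with h0 | h0
  · have hb := hnValSubZero (by omega) i h0
    show (if i = i - 1 then _ else _) = _
    rw [if_neg (fun h => by have hv := congrArg Fin.val h; rw [hb] at hv; omega),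
      if_neg (by rw [hb, h0]; omega), if_neg (by rw [hb, h0]; omega), if_pos ⟨h0, hb⟩]
  · have hb := hnValSub' (by omega) i h0
    show (if i = i - 1 then _ else _) = _
    rw [if_neg (fun h => by have hv := congrArg Fin.val h; rw [hb] at hv; omega),
      if_neg (by rw [hb]; omega), if_pos (by rw [hb]; omega)]

lemma hn_super (hN : 3 ≤ N) (i : Fin N) :
    hatanoNelson N g v i (i + 1) = (Real.exp (-g) : ℂ) := by
  have hi := i.isLt
  rcases eq_or_ne ((i : ℕ)) (N - 1) with h0 | h0
  · have hb := hnValAddLast (by omega) i h0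
    show (if i = i + 1 then _ else _) = _
    rw [if_neg (fun h => by have hv := congrArg Fin.val h; rw [hb] at hv; omega),
      if_neg (by rw [hb, h0]; omega), if_neg (by rw [hb, h0]; omega),
      if_neg (by rintro ⟨ha, _⟩; omega), if_pos ⟨h0, hb⟩]
  · have hb := hnValAdd' i (by omega)
    show (if i = i + 1 then _ else _) = _
    rw [if_neg (fun h => by have hv := congrArg Fin.val h; rw [hb] at hv; omega),
      if_pos hb]

lemma hn_zero (hN : 3 ≤ N) (i j : Fin N) (h1 : j ≠ i - 1) (h2 : j ≠ i) (h3 : j ≠ i + 1) :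
    hatanoNelson N g v i j = 0 := by
  have hi := i.isLt
  have hj := j.isLt
  show (if i = j then _ else _) = _
  rw [if_neg (fun h => h2 h.symm), if_neg, if_neg, if_neg, if_neg]
  · rintro ⟨ha, hb⟩
    exact h3 (Fin.ext (by rw [hnValAddLast (by omega) i ha]; omega))
  · rintro ⟨ha, hb⟩
    exact h1 (Fin.ext (by rw [hnValSubZero (by omega) i ha]; omega))
  · intro ha
    exact h1 (Fin.ext (by rw [hnValSub' (by omega) i (by omega)]; omega))
  · intro ha
    exact h3 (Fin.ext (by rw [hnValAdd' i (by omega)]; omega))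

lemma hn_row (hN : 3 ≤ N) (ψ : Fin N → ℂ) (i : Fin N) :
    (hatanoNelson N g v).mulVec ψ i
      = (Real.exp g : ℂ) * ψ (i - 1) + (v i : ℂ) * ψ i + (Real.exp (-g) : ℂ) * ψ (i + 1) := by
  have hi := i.isLt
  have e1 : i - 1 ≠ i := by
    intro h
    have hv := congrArg Fin.val h
    rcases eq_or_ne ((i : ℕ)) 0 with h0 | h0
    · rw [hnValSubZero (by omega) i h0] at hv; omega
    · rw [hnValSub' (by omega) i h0] at hv; omega
  have e3 : i ≠ i + 1 := by
    intro h
    have hv := congrArg Fin.val h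
    rcases eq_or_ne ((i : ℕ)) (N - 1) with h0 | h0
    · rw [hnValAddLast (by omega) i h0] at hv; omega
    · rw [hnValAdd' i (by omega)] at hv; omega
  have e2 : i - 1 ≠ i + 1 := by
    intro h
    have hv := congrArg Fin.val h
    rcases eq_or_ne ((i : ℕ)) 0 with h0 | h0
    · rw [hnValSubZero (by omega) i h0, hnValAdd' i (by omega)] at hv; omega
    · rcases eq_or_ne ((i : ℕ)) (N - 1) with h1 | h1
      · rw [hnValSub' (by omega) i h0, hnValAddLast (by omega) i h1] at hv; omega
      · rw [hnValSub' (by omega) i h0, hnValAdd' i (by omega)] at hv; omega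
  have key : ∑ j : Fin N, hatanoNelson N g v i j * ψ j
      = ∑ j ∈ ({i - 1, i, i + 1} : Finset (Fin N)), hatanoNelson N g v i j * ψ j := by
    refine (Finset.sum_subset (Finset.subset_univ _) ?_).symm
    intro j _ hj
    simp only [Finset.mem_insert, Finset.mem_singleton] at hj
    push_neg at hj
    rw [hn_zero g v hN i j hj.1 hj.2.1 hj.2.2, zero_mul]
  show ∑ j : Fin N, hatanoNelson N g v i j * ψ j = _
  rw [key, Finset.sum_insert (by simp [e1, e2]), Finset.sum_insert (by simp [e3]),
    Finset.sum_singleton, hn_sub g v hN, hn_diag, hn_super g v hN, add_assoc]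

end Entries

/-! ### Spectrum of matrices via eigenvectors -/

lemma hn_mem_spectrum_iff {n : ℕ} (A : Matrix (Fin n) (Fin n) ℂ) (μ : ℂ) :
    μ ∈ spectrum ℂ A ↔ ∃ x : Fin n → ℂ, x ≠ 0 ∧ A.mulVec x = μ • x := by
  rw [spectrum.mem_iff, Matrix.isUnit_iff_isUnit_det, isUnit_iff_ne_zero, not_not,
    ← Matrix.exists_mulVec_eq_zero_iff]
  constructor
  · rintro ⟨x, hx, h⟩
    refine ⟨x, hx, ?_⟩
    rw [Matrix.sub_mulVec, Algebra.algebraMap_eq_smul_one, Matrix.smul_mulVec,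
      Matrix.one_mulVec, sub_eq_zero] at h
    exact h.symm
  · rintro ⟨x, hx, h⟩
    refine ⟨x, hx, ?_⟩
    rw [Matrix.sub_mulVec, Algebra.algebraMap_eq_smul_one, Matrix.smul_mulVec,
      Matrix.one_mulVec, sub_eq_zero, h]

lemma hn_spec_inv (M : Matrix (Fin 2) (Fin 2) ℂ) (hdet : M.det = 1) (μ : ℂ)
    (hμ : μ ≠ 0) : μ ∈ spectrum ℂ M ↔ μ⁻¹ ∈ spectrum ℂ M := by
  rw [Matrix.det_fin_two] at hdet
  have key : ∀ c : ℂ,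
      ((algebraMap ℂ (Matrix (Fin 2) (Fin 2) ℂ)) c - M).det
        = c ^ 2 - (M 0 0 + M 1 1) * c + 1 := by
    intro c
    rw [Matrix.det_fin_two]
    simp only [Matrix.sub_apply, Matrix.algebraMap_matrix_apply, Fin.zero_eq_one_iff,
      Fin.one_eq_zero_iff, Nat.succ_ne_self, if_true, if_false, Algebra.algebraMap_self,
      RingHom.id_apply]
    norm_num
    linear_combination hdet
  rw [spectrum.mem_iff, spectrum.mem_iff, Matrix.isUnit_iff_isUnit_det,
    Matrix.isUnit_iff_isUnit_det, isUnit_iff_ne_zero, isUnit_iff_ne_zero, not_not, not_not,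
    key, key]
  have hrel : μ⁻¹ ^ 2 - (M 0 0 + M 1 1) * μ⁻¹ + 1
      = μ⁻¹ ^ 2 * (μ ^ 2 - (M 0 0 + M 1 1) * μ + 1) := by
    field_simp
    ring
  constructor
  · intro h
    rw [hrel, h, mul_zero]
  · intro h
    rw [hrel] at h
    rcases mul_eq_zero.mp h with h' | h'
    · exact absurd h' (pow_ne_zero _ (inv_ne_zero hμ))
    · exact h'

/-! ### Transfer-matrix iteration -/

noncomputable def hnStep (z c : ℂ) (p : Fin 2 → ℂ) : Fin 2 → ℂ := ![(z - c) * p 0 - p 1, p 0]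

noncomputable def hnIter (z : ℂ) (V : ℕ → ℂ) : ℕ → (Fin 2 → ℂ) → (Fin 2 → ℂ)
  | 0, w => w
  | (k+1), w => hnStep z (V k) (hnIter z V k w)

lemma hnStep_pair (z c x y : ℂ) : hnStep z c ![x, y] = ![(z - c) * x - y, x] := by
  simp [hnStep]

lemma hnIter_succ (z : ℂ) (V : ℕ → ℂ) (k : ℕ) (w : Fin 2 → ℂ) :
    hnIter z V (k+1) w = hnStep z (V k) (hnIter z V k w) := rfl

lemma hnIter_snd (z : ℂ) (V : ℕ → ℂ) (k : ℕ) (w : Fin 2 → ℂ) :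
    hnIter z V (k+1) w 1 = hnIter z V k w 0 := by
  rw [hnIter_succ]; simp [hnStep]

lemma hnIter_fst_succ (z : ℂ) (V : ℕ → ℂ) (k : ℕ) (w : Fin 2 → ℂ) :
    hnIter z V (k+1) w 0 = (z - V k) * hnIter z V k w 0 - hnIter z V k w 1 := by
  rw [hnIter_succ]; simp [hnStep]

lemma hnIter_zero_vec (z : ℂ) (V : ℕ → ℂ) (k : ℕ) : hnIter z V k 0 = 0 := by
  induction k with
  | zero => rfl
  | succ k ih =>
    rw [hnIter_succ, ih]
    funext i
    fin_cases i <;> simp [hnStep]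

lemma hnIter_eq (z : ℂ) (V : ℕ → ℂ) (φ : ℕ → ℂ) (b : ℂ) (n : ℕ)
    (h1 : φ 1 = (z - V 0) * φ 0 - b)
    (hrec : ∀ k, 1 ≤ k → k + 1 ≤ n → φ (k+1) = (z - V k) * φ k - φ (k-1)) :
    ∀ k, 1 ≤ k → k ≤ n → hnIter z V k ![φ 0, b] = ![φ k, φ (k-1)] := by
  intro k
  induction k with
  | zero => omega
  | succ k ih =>
    intro _ hk
    rcases Nat.eq_zero_or_pos k with rfl | hk1
    · rw [hnIter_succ]
      show hnStep z (V 0) ![φ 0, b] = _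
      rw [hnStep_pair, ← h1]
    · rw [hnIter_succ, ih hk1 (by omega), hnStep_pair, ← hrec k hk1 (by omega)]
      simp

lemma hn_T_mulVec (z c : ℂ) (p : Fin 2 → ℂ) :
    (!![z - c, -1; 1, 0] : Matrix (Fin 2) (Fin 2) ℂ).mulVec p = hnStep z c p := by
  funext i
  fin_cases i <;> (simp [hnStep, Matrix.mulVec, dotProduct, Fin.sum_univ_two]; try ring)

lemma hn_prod_mulVec (z : ℂ) (V : ℕ → ℂ) : ∀ (n : ℕ) (w : Fin 2 → ℂ),
    ((List.ofFn fun j : Fin n =>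
      (!![z - V j, -1; 1, 0] : Matrix (Fin 2) (Fin 2) ℂ)).reverse.prod).mulVec w
      = hnIter z V n w := by
  intro n
  induction n with
  | zero => intro w; simp [hnIter, Matrix.one_mulVec]
  | succ n ih =>
    intro w
    rw [List.ofFn_succ', List.concat_eq_append, List.reverse_append,
      List.reverse_singleton, List.singleton_append, List.prod_cons,
      ← Matrix.mulVec_mulVec]
    simp only [Fin.coe_castSucc, Fin.val_last]
    rw [ih, hn_T_mulVec]
    rfl

lemma hn_det_prod (z : ℂ) (V : ℕ → ℂ) (n : ℕ) :
    ((List.ofFn fun j : Fin n =>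
      (!![z - V j, -1; 1, 0] : Matrix (Fin 2) (Fin 2) ℂ)).reverse.prod).det = 1 := by
  rw [show ∀ M : Matrix (Fin 2) (Fin 2) ℂ, M.det = Matrix.detMonoidHom M from fun _ => rfl,
    MonoidHom.map_list_prod]
  apply List.prod_eq_one
  simp only [List.mem_map, List.mem_reverse, List.mem_ofFn]
  rintro _ ⟨M, ⟨j, rfl⟩, rfl⟩
  rw [Matrix.coe_detMonoidHom, Matrix.det_fin_two_of]
  ring

/-! ### The main theorem -/

/-- `z` is an eigenvalue of `H_N(g)` if and only if `e^{Ng}` is an eigenvalue of the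
transfer matrix product `Φ_N(z) = T_N(z)⋯T_1(z)`. -/
theorem stmt17 (N : ℕ) (hN : 3 ≤ N) (g : ℝ) (v : Fin N → ℝ) (z : ℂ) :
    z ∈ spectrum ℂ (hatanoNelson N g v) ↔
      (Real.exp (N * g) : ℂ) ∈ spectrum ℂ
        ((List.ofFn fun j : Fin N =>
          (!![z - (v j : ℂ), -1; 1, 0] : Matrix (Fin 2) (Fin 2) ℂ)).reverse.prod) := by
  haveI : NeZero N := ⟨by omega⟩
  set E : ℂ := (Real.exp g : ℂ) with hE
  set Em : ℂ := (Real.exp (-g) : ℂ) with hEm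
  have hEEm : E * Em = 1 := by
    rw [hE, hEm, ← Complex.ofReal_mul, ← Real.exp_add]
    simp
  have hE0 : E ≠ 0 := Complex.ofReal_ne_zero.mpr (Real.exp_ne_zero _)
  have hEm0 : Em ≠ 0 := Complex.ofReal_ne_zero.mpr (Real.exp_ne_zero _)
  set μ : ℂ := (Real.exp ((N : ℝ) * g) : ℂ) with hμdef
  have hμ : μ = E ^ N := by
    rw [hμdef, hE, Real.exp_nat_mul, Complex.ofReal_pow]
  have hμ0 : μ ≠ 0 := Complex.ofReal_ne_zero.mpr (Real.exp_ne_zero _)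
  set μ' : ℂ := Em ^ N with hμ'
  have hμμ' : μ * μ' = 1 := by rw [hμ, hμ', ← mul_pow, hEEm, one_pow]
  have hinv : μ⁻¹ = μ' := inv_eq_of_mul_eq_one_right hμμ'
  set V : ℕ → ℂ := fun k => if h : k < N then (v ⟨k, h⟩ : ℂ) else 0 with hV
  have hVj : ∀ i : Fin N, V (i : ℕ) = (v i : ℂ) := by
    intro i
    rw [hV]
    simp only [i.isLt, dif_pos, Fin.eta]
  have hlist : (List.ofFn fun j : Fin N =>
        (!![z - (v j : ℂ), -1; 1, 0] : Matrix (Fin 2) (Fin 2) ℂ))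
      = (List.ofFn fun j : Fin N =>
        (!![z - V (j : ℕ), -1; 1, 0] : Matrix (Fin 2) (Fin 2) ℂ)) := by
    congr 1
    funext j
    rw [hVj]
  rw [hlist, hn_spec_inv _ (hn_det_prod z V N) _ hμ0, hinv,
    hn_mem_spectrum_iff, hn_mem_spectrum_iff]
  have hΦmul : ∀ w, ((List.ofFn fun j : Fin N =>
      (!![z - V (j : ℕ), -1; 1, 0] : Matrix (Fin 2) (Fin 2) ℂ)).reverse.prod).mulVec w
      = hnIter z V N w := fun w => hn_prod_mulVec z V N w
  have hrow : ∀ ψ : Fin N → ℂ, ((hatanoNelson N g v).mulVec ψ = z • ψ ↔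
      ∀ i : Fin N, E * ψ (i - 1) + (v i : ℂ) * ψ i + Em * ψ (i + 1) = z * ψ i) := by
    intro ψ
    rw [funext_iff]
    refine forall_congr' fun i => ?_
    rw [hn_row g v hN ψ i, Pi.smul_apply, smul_eq_mul, ← hE, ← hEm]
  constructor
  · -- eigenvector of H gives eigenvector of the transfer matrix
    rintro ⟨ψ, hψ0, hψ⟩
    rw [hrow] at hψ
    set φ : ℕ → ℂ := fun k => Em ^ k * perExt ψ k with hφ
    set b : ℂ := μ * φ (N - 1) with hb
    have hpow : ∀ m : ℕ, E ^ m * Em ^ m = 1 := fun m => by rw [← mul_pow, hEEm, one_pow]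
    have h1 : φ 1 = (z - V 0) * φ 0 - b := by
      set i0 : Fin N := ⟨0, by omega⟩ with hi0
      have hr := hψ i0
      have e1 : ψ (i0 - 1) = perExt ψ (N - 1) := by
        refine (congrArg ψ (Fin.ext ?_)).symm
        show (N - 1) % N = ((i0 - 1 : Fin N) : ℕ)
        rw [hnValSubZero (by omega) i0 rfl, Nat.mod_eq_of_lt (by omega)]
      have e2 : ψ i0 = perExt ψ 0 := (perExt_val ψ i0).symm
      have e3 : ψ (i0 + 1) = perExt ψ 1 := (perExt_succ (by omega) ψ i0).symm
      rw [e1, e2, e3] at hr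
      have hv0 : V 0 = (v i0 : ℂ) := hVj i0
      have hEk : μ * Em ^ (N - 1) = E := by
        obtain ⟨M, hNM⟩ : ∃ M, N = M + 1 := ⟨N - 1, by omega⟩
        rw [hμ, hNM, Nat.add_sub_cancel, pow_succ]
        linear_combination E * hpow M
      rw [hφ, hb, hv0]
      simp only
      linear_combination perExt ψ (N - 1) * hEk + hr
    have hrec : ∀ k, 1 ≤ k → k + 1 ≤ N → φ (k+1) = (z - V k) * φ k - φ (k-1) := by
      intro k hk1 hk2
      obtain ⟨m, rfl⟩ : ∃ m, k = m + 1 := ⟨k - 1, by omega⟩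
      set i : Fin N := ⟨m + 1, by omega⟩ with hidef
      have hr := hψ i
      have e1 : ψ (i - 1) = perExt ψ m := (perExt_pred (by omega) ψ i (by simp [hidef])).symm
      have e2 : ψ i = perExt ψ (m + 1) := (perExt_val ψ i).symm
      have e3 : ψ (i + 1) = perExt ψ (m + 2) := (perExt_succ (by omega) ψ i).symm
      rw [e1, e2, e3] at hr
      have hvv : V (m + 1) = (v i : ℂ) := hVj i
      have hEmE : Em ^ (m + 1) * E = Em ^ m := by
        have : Em ^ (m + 1) * E = Em ^ m * (E * Em) := by ring
        rw [this, hEEm, mul_one]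
      rw [hφ, hvv]
      simp only [Nat.add_sub_cancel]
      linear_combination Em ^ (m + 1) * hr - perExt ψ m * hEmE
    have hiter := hnIter_eq z V φ b N h1 hrec
    have hw0 : (![φ 0, b] : Fin 2 → ℂ) ≠ 0 := by
      intro hw
      have h0 : φ 0 = 0 := by simpa using congrFun hw 0
      have hb0 : b = 0 := by simpa using congrFun hw 1
      refine hψ0 (funext fun j => ?_)
      have hφj : φ (j : ℕ) = 0 := by
        rcases Nat.eq_zero_or_pos (j : ℕ) with hj | hj
        · rw [hj]; exact h0
        · have hit := hiter ((j : ℕ) + 1) (by omega) (by have := j.isLt; omega)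
          rw [hw, hnIter_zero_vec] at hit
          have := congrFun hit 1
          simpa using this.symm
      rw [hφ] at hφj
      simp only [perExt_val] at hφj
      exact (mul_eq_zero.mp hφj).resolve_left (pow_ne_zero _ hEm0)
    refine ⟨![φ 0, b], hw0, ?_⟩
    rw [hΦmul, hiter N (by omega) le_rfl]
    funext idx
    fin_cases idx
    · show φ N = (μ' • ![φ 0, b]) 0
      simp only [Pi.smul_apply, Matrix.cons_val_zero, smul_eq_mul]
      rw [hφ]
      simp only [perExt_top]
      rw [hμ']
      ring
    · show φ (N - 1) = (μ' • ![φ 0, b]) 1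
      simp only [Pi.smul_apply, Matrix.cons_val_one, Matrix.head_cons, Matrix.cons_val_zero, smul_eq_mul, hb]
      linear_combination (-(φ (N - 1))) * hμμ'
  · -- eigenvector of the transfer matrix gives eigenvector of H
    rintro ⟨w, hw0, hw⟩
    rw [hΦmul] at hw
    set φ : ℕ → ℂ := fun k => hnIter z V k w 0 with hφ
    have hφ0 : w 0 = φ 0 := rfl
    have hrec : ∀ k, 1 ≤ k → φ (k+1) = (z - V k) * φ k - φ (k-1) := by
      intro k hk
      obtain ⟨m, rfl⟩ : ∃ m, k = m + 1 := ⟨k - 1, by omega⟩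
      show hnIter z V (m+2) w 0 = _
      rw [hnIter_fst_succ, hnIter_snd]
      rfl
    have h1 : φ 1 = (z - V 0) * φ 0 - w 1 := by
      show hnIter z V 1 w 0 = _
      rw [hnIter_fst_succ]
      rfl
    have hNsnd : hnIter z V N w 1 = φ (N - 1) := by
      have h := hnIter_snd z V (N - 1) w
      rw [← show N = (N - 1) + 1 by omega] at h
      exact h
    have hwN0 : φ N = μ' * φ 0 := by
      have h := congrFun hw 0
      simp only [Pi.smul_apply, smul_eq_mul] at h
      rw [← hφ0]
      exact h
    have hw1 : w 1 = μ * φ (N - 1) := by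
      have h := congrFun hw 1
      simp only [Pi.smul_apply, smul_eq_mul] at h
      rw [hNsnd] at h
      linear_combination (-μ) * h - w 1 * hμμ'
    set ψ : Fin N → ℂ := fun j => E ^ (j : ℕ) * φ (j : ℕ) with hψdef
    have hψ0 : ψ ≠ 0 := by
      intro h
      apply hw0
      have h0 : φ 0 = 0 := by
        have := congrFun h ⟨0, by omega⟩
        simpa [hψdef] using this
      have hN1 : φ (N - 1) = 0 := by
        have := congrFun h ⟨N - 1, by omega⟩
        simp only [hψdef, Pi.zero_apply] at this
        exact (mul_eq_zero.mp this).resolve_left (pow_ne_zero _ hE0)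
      funext idx
      fin_cases idx
      · show w 0 = 0
        rw [hφ0]; exact h0
      · show w 1 = 0
        rw [hw1, hN1, mul_zero]
    refine ⟨ψ, hψ0, ?_⟩
    rw [hrow]
    intro i
    have hiLt := i.isLt
    rcases eq_or_ne ((i : ℕ)) 0 with h0 | h0
    · have hsub : ((i - 1 : Fin N) : ℕ) = N - 1 := hnValSubZero (by omega) i h0
      have hadd : ((i + 1 : Fin N) : ℕ) = 1 := by
        rw [hnValAdd' i (by omega), h0]
      have hv0 : V 0 = (v i : ℂ) := by
        have := hVj i
        rw [h0] at this
        exact this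
      rw [hv0] at h1
      have hENpow : E * E ^ (N - 1) = μ := by
        obtain ⟨M, hNM⟩ : ∃ M, N = M + 1 := ⟨N - 1, by omega⟩
        rw [hμ, hNM, Nat.add_sub_cancel]
        exact (pow_succ' E M).symm
      simp only [hψdef, hsub, hadd, h0]
      rw [h1, hw1]
      simp only [pow_zero, pow_one, one_mul]
      linear_combination φ (N - 1) * hENpow
        + ((z - (v i : ℂ)) * φ 0 - μ * φ (N - 1)) * hEEm
    · obtain ⟨m, hm⟩ : ∃ m, (i : ℕ) = m + 1 := ⟨(i : ℕ) - 1, by omega⟩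
      have hsub : ((i - 1 : Fin N) : ℕ) = m := by
        rw [hnValSub' (by omega) i h0, hm]
        omega
      have hvv : V (m + 1) = (v i : ℂ) := by
        have := hVj i
        rw [hm] at this
        exact this
      have hr := hrec (m + 1) (by omega)
      simp only [Nat.add_sub_cancel] at hr
      rw [hvv] at hr
      rcases eq_or_ne ((i : ℕ)) (N - 1) with hlast | hlast
      · have hadd : ((i + 1 : Fin N) : ℕ) = 0 := hnValAddLast (by omega) i hlast
        have hNm : N = m + 2 := by omega
        have hφ0N : φ 0 = μ * φ N := by
          linear_combination (-μ) * hwN0 - φ 0 * hμμ'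
        have hrN : φ N = (z - (v i : ℂ)) * φ (m + 1) - φ m := by
          rw [hNm]; exact hr
        have hEmμ : Em * μ = E ^ (m + 1) := by
          rw [hμ, hNm]
          linear_combination E ^ (m + 1) * hEEm
        simp only [hψdef, hsub, hadd, hm]
        rw [hφ0N, hrN]
        simp only [pow_zero, one_mul]
        linear_combination ((z - (v i : ℂ)) * φ (m + 1) - φ m) * hEmμ
      · have hadd : ((i + 1 : Fin N) : ℕ) = m + 2 := by
          rw [hnValAdd' i (by omega), hm]
        simp only [hψdef, hsub, hadd, hm]
        rw [hr]
        linear_combination (E ^ (m + 1) * ((z - (v i : ℂ)) * φ (m + 1) - φ m)) * hEEm
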